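/- Let u, v : Ω → ℝ be smooth, and suppose u₂ and v₂ − v₁ vanish nowhere on Ω. If u₃·(v₂ − v₁) = u₂·(v₃ − v₂) and u₄·(v₂ − v₁) = u₂·(v₄ − v₃) hold identically on Ω, then the functions m := (v₃ − v₂)/(v₂ − v₁) and n := (v₄ − v₃)/(v₂ − v₁) satisfy m₄ − n₃ + m·n₂ − n·m₂ = 0 on Ω. -/

import Mathlib

/-- Partial derivative of `F : ℝ⁴ → ℝ` in the `i`-th coordinate direction. -/
noncomputable def pd (i : Fin 4) (F : (Fin 4 → ℝ) → ℝ) : (Fin 4 → ℝ) → ℝ :=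
  fun x => fderiv ℝ F x (Pi.single i 1)

lemma pd_congr (i : Fin 4) {F G : (Fin 4 → ℝ) → ℝ} {Ω : Set (Fin 4 → ℝ)} (hΩ : IsOpen Ω)
    {x : Fin 4 → ℝ} (hx : x ∈ Ω) (h : ∀ y ∈ Ω, F y = G y) : pd i F x = pd i G x := by
  unfold pd
  rw [Filter.EventuallyEq.fderiv_eq (Filter.eventuallyEq_of_mem (hΩ.mem_nhds hx) h)]

lemma pd_mul (i : Fin 4) {f g : (Fin 4 → ℝ) → ℝ} {x} (hf : DifferentiableAt ℝ f x)
    (hg : DifferentiableAt ℝ g x) :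
    pd i (fun y => f y * g y) x = f x * pd i g x + g x * pd i f x := by
  unfold pd
  rw [fderiv_fun_mul hf hg]
  simp

lemma pd_inv (i : Fin 4) {g : (Fin 4 → ℝ) → ℝ} {x} (hg : DifferentiableAt ℝ g x)
    (h0 : g x ≠ 0) : pd i (fun y => (g y)⁻¹) x = -pd i g x / (g x)^2 := by
  unfold pd
  have h : fderiv ℝ (fun y => (g y)⁻¹) x
      = (fderiv ℝ (fun t : ℝ => t⁻¹) (g x)).comp (fderiv ℝ g x) :=
    fderiv_comp x (differentiableAt_inv h0) hg
  rw [h, fderiv_inv]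
  simp
  ring

lemma pd_div (i : Fin 4) {f g : (Fin 4 → ℝ) → ℝ} {x} (hf : DifferentiableAt ℝ f x)
    (hg : DifferentiableAt ℝ g x) (h0 : g x ≠ 0) :
    pd i (fun y => f y / g y) x = (pd i f x * g x - f x * pd i g x) / (g x)^2 := by
  have e : (fun y => f y / g y) = fun y => f y * (g y)⁻¹ := by
    funext y; rw [div_eq_mul_inv]
  rw [e, pd_mul i (g := fun y => (g y)⁻¹) hf (hg.inv h0), pd_inv i hg h0]
  field_simp
  ring

lemma pd_smooth {u : (Fin 4 → ℝ) → ℝ} {Ω : Set (Fin 4 → ℝ)} (hΩ : IsOpen Ω)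
    (hu : ContDiffOn ℝ (⊤ : ℕ∞) u Ω) (j : Fin 4) : ContDiffOn ℝ (⊤ : ℕ∞) (pd j u) Ω := by
  have h := hu.fderiv_of_isOpen hΩ (m := (⊤ : ℕ∞)) (by exact_mod_cast le_top)
  exact h.clm_apply contDiffOn_const

lemma pd_comm {u : (Fin 4 → ℝ) → ℝ} {Ω : Set (Fin 4 → ℝ)} (hΩ : IsOpen Ω)
    (hu : ContDiffOn ℝ (⊤ : ℕ∞) u Ω) {x} (hx : x ∈ Ω) (i j : Fin 4) :
    pd i (pd j u) x = pd j (pd i u) x := by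
  have hmem := hΩ.mem_nhds hx
  have hd : ∀ᶠ y in nhds x, HasFDerivAt u (fderiv ℝ u y) y := by
    filter_upwards [hΩ.eventually_mem hx] with y hy
    exact ((hu.contDiffAt (hΩ.mem_nhds hy)).differentiableAt (by simp)).hasFDerivAt
  have hf' : DifferentiableAt ℝ (fderiv ℝ u) x := by
    have h2 : ContDiffAt ℝ ((⊤ : ℕ∞)) u x := hu.contDiffAt hmem
    have := h2.fderiv_right (m := 1) (by decide)
    exact this.differentiableAt one_ne_zero
  have hsym := second_derivative_symmetric_of_eventually hd hf'.hasFDerivAt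
    (Pi.single i 1) (Pi.single j 1)
  have key : ∀ k l : Fin 4, pd k (pd l u) x
      = (fderiv ℝ (fderiv ℝ u) x) (Pi.single k 1) (Pi.single l 1) := by
    intro k l
    unfold pd
    rw [show (fun y => fderiv ℝ u y (Pi.single l 1))
        = fun y => (fderiv ℝ u y) ((fun _ => (Pi.single l 1 : Fin 4 → ℝ)) y) from rfl]
    rw [fderiv_clm_apply hf' (differentiableAt_const _)]
    simp
  rw [key i j, key j i, hsym]
/-- For the Segre type [11] system `u₃(v₂ − v₁) = u₂(v₃ − v₂)`, `u₄(v₂ − v₁) = u₂(v₄ − v₃)`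
with a 5×4 Kronecker block, the functions `m = (v₃ − v₂)/(v₂ − v₁)`,
`n = (v₄ − v₃)/(v₂ − v₁)` satisfy `m₄ − n₃ + mn₂ − nm₂ = 0`.
Coordinates `x¹,…,x⁴` are indexed by `0,…,3`. -/
theorem statement14 (Ω : Set (Fin 4 → ℝ)) (hΩ : IsOpen Ω)
    (u v : (Fin 4 → ℝ) → ℝ)
    (hu : ContDiffOn ℝ (⊤ : ℕ∞) u Ω) (hv : ContDiffOn ℝ (⊤ : ℕ∞) v Ω)
    (hu2 : ∀ x ∈ Ω, pd 1 u x ≠ 0)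
    (hv21 : ∀ x ∈ Ω, pd 1 v x - pd 0 v x ≠ 0)
    (heq1 : ∀ x ∈ Ω,
      pd 2 u x * (pd 1 v x - pd 0 v x) = pd 1 u x * (pd 2 v x - pd 1 v x))
    (heq2 : ∀ x ∈ Ω,
      pd 3 u x * (pd 1 v x - pd 0 v x) = pd 1 u x * (pd 3 v x - pd 2 v x)) :
    ∀ x ∈ Ω,
      pd 3 (fun y => (pd 2 v y - pd 1 v y) / (pd 1 v y - pd 0 v y)) x
        - pd 2 (fun y => (pd 3 v y - pd 2 v y) / (pd 1 v y - pd 0 v y)) x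
        + ((pd 2 v x - pd 1 v x) / (pd 1 v x - pd 0 v x))
            * pd 1 (fun y => (pd 3 v y - pd 2 v y) / (pd 1 v y - pd 0 v y)) x
        - ((pd 3 v x - pd 2 v x) / (pd 1 v x - pd 0 v x))
            * pd 1 (fun y => (pd 2 v y - pd 1 v y) / (pd 1 v y - pd 0 v y)) x = 0 := by
  intro x hx
  -- On Ω the two quotients coincide with pd2 u / pd1 u and pd3 u / pd1 u
  have hm : ∀ y ∈ Ω, (pd 2 v y - pd 1 v y) / (pd 1 v y - pd 0 v y)
      = pd 2 u y / pd 1 u y := by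
    intro y hy
    rw [div_eq_div_iff (hv21 y hy) (hu2 y hy)]
    linarith [heq1 y hy]
  have hn : ∀ y ∈ Ω, (pd 3 v y - pd 2 v y) / (pd 1 v y - pd 0 v y)
      = pd 3 u y / pd 1 u y := by
    intro y hy
    rw [div_eq_div_iff (hv21 y hy) (hu2 y hy)]
    linarith [heq2 y hy]
  -- differentiability of the partial derivatives of u at x
  have hdiff : ∀ j : Fin 4, DifferentiableAt ℝ (pd j u) x := by
    intro j
    exact ((pd_smooth hΩ hu j).contDiffAt (hΩ.mem_nhds hx)).differentiableAt
      (by simp)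
  -- rewrite the outer partial derivatives
  have e1 : ∀ i : Fin 4,
      pd i (fun y => (pd 2 v y - pd 1 v y) / (pd 1 v y - pd 0 v y)) x
        = (pd i (pd 2 u) x * pd 1 u x - pd 2 u x * pd i (pd 1 u) x) / (pd 1 u x)^2 := by
    intro i
    rw [pd_congr i hΩ hx hm, pd_div i (hdiff 2) (hdiff 1) (hu2 x hx)]
  have e2 : ∀ i : Fin 4,
      pd i (fun y => (pd 3 v y - pd 2 v y) / (pd 1 v y - pd 0 v y)) x
        = (pd i (pd 3 u) x * pd 1 u x - pd 3 u x * pd i (pd 1 u) x) / (pd 1 u x)^2 := by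
    intro i
    rw [pd_congr i hΩ hx hn, pd_div i (hdiff 3) (hdiff 1) (hu2 x hx)]
  rw [e1 3, e1 1, e2 2, e2 1, hm x hx, hn x hx,
    pd_comm hΩ hu hx 3 2, pd_comm hΩ hu hx 3 1, pd_comm hΩ hu hx 2 1]
  have hQ := hu2 x hx
  field_simp
  ring
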